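/- Let A be a finite-dimensional commutative (not necessarily associative or unital) algebra over a field F, and let e ∈ A be an idempotent such that ad(e) is diagonalisable. Then e associates with its {1,0}-eigenspace, i.e. e·(x·z) = (e·x)·z for all x ∈ A and all z ∈ A^e_1 + A^e_0, if and only if the eigenspaces of e satisfy the Seress fusion rules, i.e. for every φ ∈ F, every x ∈ A^e_φ and every z ∈ A^e_1 + A^e_0 one has x·z ∈ A^e_φ. -/

import Mathlib

/-- for an idempotent `e` with diagonalisable adjoint in a
finite-dimensional commutative algebra, `e` associates with its `{1,0}`-eigenspace
iff the eigenspaces of `e` satisfy the Seress fusion rules. -/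
theorem seress_iff_assoc {F : Type*} [Field F] {A : Type*} [NonUnitalNonAssocRing A]
    [Module F A] [SMulCommClass F A A] [IsScalarTower F A A] [FiniteDimensional F A]
    (comm : ∀ a b : A, a * b = b * a)
    (e : A) (he : e * e = e)
    (hdiag : (⨆ φ : F, Module.End.eigenspace (LinearMap.mul F A e) φ) = ⊤) :
    (∀ x z : A,
        z ∈ Module.End.eigenspace (LinearMap.mul F A e) 1 ⊔
            Module.End.eigenspace (LinearMap.mul F A e) 0 →
        e * (x * z) = (e * x) * z) ↔
      (∀ (φ : F) (x z : A),
        x ∈ Module.End.eigenspace (LinearMap.mul F A e) φ →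
        z ∈ Module.End.eigenspace (LinearMap.mul F A e) 1 ⊔
            Module.End.eigenspace (LinearMap.mul F A e) 0 →
        x * z ∈ Module.End.eigenspace (LinearMap.mul F A e) φ) := by
  constructor
  · intro h φ x z hx hz
    rw [Module.End.mem_eigenspace_iff] at hx ⊢
    rw [LinearMap.mul_apply'] at hx ⊢
    rw [h x z hz, hx, smul_mul_assoc]
  · intro h x z hz
    have hx : x ∈ ⨆ φ : F, Module.End.eigenspace (LinearMap.mul F A e) φ :=
      hdiag ▸ Submodule.mem_top
    refine Submodule.iSup_induction _ (motive := fun y => e * (y * z) = (e * y) * z) hx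
      (fun φ y hy => ?_) (by simp) (fun a b ha hb => ?_)
    · show e * (y * z) = (e * y) * z
      have hy' := hy
      rw [Module.End.mem_eigenspace_iff, LinearMap.mul_apply'] at hy'
      have := h φ y z hy hz
      rw [Module.End.mem_eigenspace_iff, LinearMap.mul_apply'] at this
      rw [this, hy', smul_mul_assoc]
    · show e * ((a + b) * z) = (e * (a + b)) * z
      change e * (a * z) = (e * a) * z at ha
      change e * (b * z) = (e * b) * z at hb
      rw [add_mul, mul_add, ha, hb, mul_add, add_mul]
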